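/- arXiv:2212.13383 — 2 statements merged into one kernel-verified Lean document; each statement's English description precedes it below -/
import Mathlib

section
/- (CDF, Case 2.) Suppose θ₁+θ₂ = θ₁′ and θ₁+θ₂ ≠ θ₂′. Then for the joint CDF F(y₁,y₂) = ∫_a^{y₁} ∫_a^{y₂} f(u,v) dv du of the DPRH model: if a < y₁ < y₂ < b then F(y₁,y₂) = F₀(y₁)^{θ₁+θ₂}·[1 + θ₂ ln(F₀(y₂)/F₀(y₁))], and if a < y₂ < y₁ < b then F(y₁,y₂) = F₀(y₂)^{θ₁+θ₂} + (θ₁ F₀(y₂)^{θ₂′}/(θ₁+θ₂−θ₂′))·[F₀(y₁)^{θ₁+θ₂−θ₂′} − F₀(y₂)^{θ₁+θ₂−θ₂′}]. -/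
open MeasureTheory Set

lemma improper_ftc {G g : ℝ → ℝ} {a c L : ℝ} (hac : a < c)
    (hG : ∀ x ∈ Set.Ioo a c, HasDerivAt G (g x) x)
    (hGc : ContinuousAt G c)
    (hgpos : ∀ x ∈ Set.Ioo a c, 0 ≤ g x)
    (hL : Filter.Tendsto G (nhdsWithin a (Set.Ioi a)) (nhds L)) :
    IntervalIntegrable g volume a c ∧ (∫ x in a..c, g x) = G c - L := by
  set G' : ℝ → ℝ := fun x => if x ≤ a then L else G x with hG'def
  have hEq : ∀ x, a < x → G' x = G x := fun x hx => if_neg (not_le.2 hx)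
  have hEvEq : ∀ x, a < x → G' =ᶠ[nhds x] G := by
    intro x hx
    filter_upwards [Ioi_mem_nhds hx] with y hy using hEq y hy
  have hG'deriv : ∀ x ∈ Set.Ioo a c, HasDerivAt G' (g x) x := fun x hx =>
    (hG x hx).congr_of_eventuallyEq (hEvEq x hx.1)
  have hcont : ContinuousOn G' (Set.Icc a c) := by
    intro x hx
    rcases eq_or_lt_of_le hx.1 with hax | hax
    · rw [← hax]
      have h1 : ContinuousWithinAt G' (Set.Ioi a) a := by
        have h2 : Filter.Tendsto G' (nhdsWithin a (Set.Ioi a)) (nhds L) := by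
          apply hL.congr'
          filter_upwards [self_mem_nhdsWithin] with y hy
          exact (hEq y hy).symm
        have h3 : G' a = L := if_pos le_rfl
        rw [ContinuousWithinAt, h3]
        exact h2
      exact (continuousWithinAt_Ioi_iff_Ici.1 h1).mono Set.Icc_subset_Ici_self
    · have hca : ContinuousAt G x := by
        rcases eq_or_lt_of_le hx.2 with rfl | hxc
        · exact hGc
        · exact (hG x ⟨hax, hxc⟩).continuousAt
      exact (hca.congr (hEvEq x hax).symm).continuousWithinAt
  have hint : IntegrableOn g (Set.Ioc a c) :=
    intervalIntegral.integrableOn_deriv_of_nonneg hcont hG'deriv hgpos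
  have hii : IntervalIntegrable g volume a c :=
    (intervalIntegrable_iff_integrableOn_Ioc_of_le hac.le).2 hint
  refine ⟨hii, ?_⟩
  have hres := intervalIntegral.integral_eq_sub_of_hasDerivAt_of_le hac.le hcont hG'deriv hii
  rw [hres, hEq c hac]
  simp [hG'def]

lemma integral_congr_Ioo {f g : ℝ → ℝ} {a b : ℝ} (hab : a ≤ b)
    (h : ∀ x ∈ Set.Ioo a b, f x = g x) :
    (∫ x in a..b, f x) = ∫ x in a..b, g x := by
  apply intervalIntegral.integral_congr_ae
  have hb : ∀ᵐ x : ℝ ∂volume, x ∉ ({b} : Set ℝ) :=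
    (Set.countable_singleton b).ae_notMem _
  filter_upwards [hb] with x hx hmem
  rw [Set.uIoc_of_le hab] at hmem
  exact h x ⟨hmem.1, lt_of_le_of_ne hmem.2 (by simpa using hx)⟩

lemma ii_congr_Ioo {f g : ℝ → ℝ} {u v : ℝ} (huv : u ≤ v)
    (h : ∀ x ∈ Set.Ioo u v, f x = g x)
    (hf : IntervalIntegrable f volume u v) : IntervalIntegrable g volume u v := by
  rw [intervalIntegrable_iff_integrableOn_Ioc_of_le huv] at hf ⊢
  apply hf.congr
  have hae : ∀ᵐ x ∂(volume.restrict (Set.Ioc u v)), x ∈ Set.Ioc u v :=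
    ae_restrict_mem measurableSet_Ioc
  have hv : ∀ᵐ x ∂(volume.restrict (Set.Ioc u v)), x ∉ ({v} : Set ℝ) :=
    MeasureTheory.ae_restrict_of_ae ((Set.countable_singleton v).ae_notMem _)
  filter_upwards [hae, hv] with x hx hxv
  exact h x ⟨hx.1, lt_of_le_of_ne hx.2 (by simpa using hxv)⟩

noncomputable def dprh (a b : ℝ) (F₀ f₀ : ℝ → ℝ) (θ₁ θ₂ θ₁' θ₂' : ℝ) (y₁ y₂ : ℝ) : ℝ :=
  if a < y₁ ∧ y₁ < y₂ ∧ y₂ < b then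
    θ₁' * θ₂ * f₀ y₁ * f₀ y₂ * F₀ y₁ ^ (θ₁' - 1) * F₀ y₂ ^ (θ₁ + θ₂ - θ₁' - 1)
  else if a < y₂ ∧ y₂ < y₁ ∧ y₁ < b then
    θ₁ * θ₂' * f₀ y₁ * f₀ y₂ * F₀ y₁ ^ (θ₁ + θ₂ - θ₂' - 1) * F₀ y₂ ^ (θ₂' - 1)
  else 0

theorem dprh_cdf_case2
    (a b : ℝ) (hab : a < b) (F₀ f₀ : ℝ → ℝ)
    (hderiv : ∀ y ∈ Ioo a b, HasDerivAt F₀ (f₀ y) y)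
    (hf₀cont : ContinuousOn f₀ (Ioo a b))
    (hmono : StrictMonoOn F₀ (Ioo a b))
    (hf₀pos : ∀ y ∈ Ioo a b, 0 < f₀ y)
    (hF₀pos : ∀ y ∈ Ioo a b, 0 < F₀ y)
    (hF₀lt1 : ∀ y ∈ Ioo a b, F₀ y < 1)
    (hFa : Filter.Tendsto F₀ (nhdsWithin a (Ioi a)) (nhds 0))
    (hFb : Filter.Tendsto F₀ (nhdsWithin b (Iio b)) (nhds 1))
    (θ₁ θ₂ θ₁' θ₂' : ℝ) (hθ₁ : 0 < θ₁) (hθ₂ : 0 < θ₂) (hθ₁' : 0 < θ₁') (hθ₂' : 0 < θ₂')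
    (heq₁ : θ₁ + θ₂ = θ₁') (hne₂ : θ₁ + θ₂ ≠ θ₂') (y₁ y₂ : ℝ)
    :
    (a < y₁ → y₁ < y₂ → y₂ < b →
      (∫ u in a..y₁, ∫ v in a..y₂, dprh a b F₀ f₀ θ₁ θ₂ θ₁' θ₂' u v) =
        F₀ y₁ ^ (θ₁ + θ₂) * (1 + θ₂ * Real.log (F₀ y₂ / F₀ y₁))) ∧
    (a < y₂ → y₂ < y₁ → y₁ < b →
      (∫ u in a..y₁, ∫ v in a..y₂, dprh a b F₀ f₀ θ₁ θ₂ θ₁' θ₂' u v) =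
        F₀ y₂ ^ (θ₁ + θ₂) + θ₁ * F₀ y₂ ^ θ₂' / (θ₁ + θ₂ - θ₂') *
          (F₀ y₁ ^ (θ₁ + θ₂ - θ₂') - F₀ y₂ ^ (θ₁ + θ₂ - θ₂'))) := by
  subst heq₁
  have hs : (0:ℝ) < θ₁ + θ₂ := by positivity
  have hp2 : θ₁ + θ₂ - θ₂' ≠ 0 := sub_ne_zero_of_ne hne₂
  have hF₀c : ContinuousOn F₀ (Ioo a b) := fun x hx => (hderiv x hx).continuousAt.continuousWithinAt
  have hPder : ∀ (p : ℝ), p ≠ 0 → ∀ x ∈ Ioo a b,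
      HasDerivAt (fun y => F₀ y ^ p / p) (f₀ x * F₀ x ^ (p - 1)) x := by
    intro p hp x hx
    have h := ((hderiv x hx).rpow_const (p := p) (Or.inl (hF₀pos x hx).ne')).div_const p
    refine h.congr_deriv ?_
    field_simp
  have hlog : ∀ x ∈ Ioo a b, HasDerivAt (fun y => Real.log (F₀ y)) (f₀ x / F₀ x) x :=
    fun x hx => (hderiv x hx).log (hF₀pos x hx).ne'
  have hrsub : ∀ x ∈ Ioo a b, ∀ p : ℝ, F₀ x ^ (p - 1) = F₀ x ^ p / F₀ x := by
    intro x hx p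
    rw [Real.rpow_sub (hF₀pos x hx), Real.rpow_one]
  have hFa' : Filter.Tendsto F₀ (nhdsWithin a (Ioi a)) (nhdsWithin 0 (Ioi 0)) := by
    rw [tendsto_nhdsWithin_iff]
    refine ⟨hFa, ?_⟩
    filter_upwards [Ioo_mem_nhdsGT_of_mem (Set.left_mem_Ico.2 hab)] with x hx
    exact hF₀pos x hx
  have hT1 : ∀ p : ℝ, 0 < p →
      Filter.Tendsto (fun x => F₀ x ^ p) (nhdsWithin a (Ioi a)) (nhds 0) := by
    intro p hp
    have hc : Filter.Tendsto (fun t : ℝ => t ^ p) (nhdsWithin 0 (Ioi 0)) (nhds 0) := by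
      have h0 : ContinuousAt (fun t : ℝ => t ^ p) 0 :=
        Real.continuousAt_rpow_const 0 p (Or.inr hp.le)
      have h1 : Filter.Tendsto (fun t : ℝ => t ^ p) (nhdsWithin 0 (Ioi 0)) (nhds ((0:ℝ) ^ p)) :=
        h0.tendsto.mono_left (nhdsWithin_le_nhds (s := Ioi (0:ℝ)))
      simpa [Real.zero_rpow hp.ne'] using h1
    exact hc.comp hFa'
  have hT2 : Filter.Tendsto (fun x => F₀ x ^ (θ₁ + θ₂) * Real.log (F₀ x))
      (nhdsWithin a (Ioi a)) (nhds 0) := by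
    have h := (tendsto_log_mul_rpow_nhdsGT_zero hs).comp hFa'
    exact h.congr fun x => by simp [Function.comp, mul_comm]
  have keyA : ∀ (p : ℝ), 0 < p → ∀ (c : ℝ), a < c → c < b →
      IntervalIntegrable (fun v => f₀ v * F₀ v ^ (p - 1)) volume a c ∧
      (∫ v in a..c, f₀ v * F₀ v ^ (p - 1)) = F₀ c ^ p / p := by
    intro p hp c hac hcb
    have h := improper_ftc (G := fun y => F₀ y ^ p / p) (L := 0) hac
      (fun x hx => hPder p hp.ne' x ⟨hx.1, hx.2.trans hcb⟩)
      (hPder p hp.ne' c ⟨hac, hcb⟩).continuousAt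
      (fun x hx => mul_nonneg (hf₀pos x ⟨hx.1, hx.2.trans hcb⟩).le
        (Real.rpow_nonneg (hF₀pos x ⟨hx.1, hx.2.trans hcb⟩).le _))
      (by simpa using (hT1 p hp).div_const p)
    exact ⟨h.1, by simpa using h.2⟩
  have keyCont : ∀ (p : ℝ) (u c : ℝ), a < u → u ≤ c → c < b →
      ContinuousOn (fun v => f₀ v * F₀ v ^ p) (Icc u c) := by
    intro p u c hu huc hc
    have hsub : Icc u c ⊆ Ioo a b := fun x hx => ⟨hu.trans_le hx.1, lt_of_le_of_lt hx.2 hc⟩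
    exact (hf₀cont.mono hsub).mul
      ((hF₀c.mono hsub).rpow_const fun x hx => Or.inl (hF₀pos x (hsub hx)).ne')
  have keyC : ∀ (p : ℝ), p ≠ 0 → ∀ (u c : ℝ), a < u → u ≤ c → c < b →
      (∫ v in u..c, f₀ v * F₀ v ^ (p - 1)) = F₀ c ^ p / p - F₀ u ^ p / p := by
    intro p hp u c hu huc hc
    apply intervalIntegral.integral_eq_sub_of_hasDerivAt
    · intro x hx
      rw [Set.uIcc_of_le huc] at hx
      exact hPder p hp x ⟨hu.trans_le hx.1, lt_of_le_of_lt hx.2 hc⟩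
    · apply ContinuousOn.intervalIntegrable
      rw [Set.uIcc_of_le huc]
      exact keyCont (p - 1) u c hu huc hc
  have keyB : ∀ (u c : ℝ), a < u → u ≤ c → c < b →
      (∫ v in u..c, f₀ v * F₀ v ^ (-1 : ℝ)) = Real.log (F₀ c) - Real.log (F₀ u) := by
    intro u c hu huc hc
    apply intervalIntegral.integral_eq_sub_of_hasDerivAt
    · intro x hx
      rw [Set.uIcc_of_le huc] at hx
      have hx' : x ∈ Ioo a b := ⟨hu.trans_le hx.1, lt_of_le_of_lt hx.2 hc⟩
      have h := hlog x hx'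
      refine h.congr_deriv ?_
      rw [Real.rpow_neg_one, ← div_eq_mul_inv]
    · apply ContinuousOn.intervalIntegrable
      rw [Set.uIcc_of_le huc]
      exact keyCont (-1) u c hu huc hc
  have hdprh1 : ∀ u v, a < u → u < v → v < b →
      dprh a b F₀ f₀ θ₁ θ₂ (θ₁ + θ₂) θ₂' u v =
        (θ₁ + θ₂) * θ₂ * f₀ u * f₀ v * F₀ u ^ (θ₁ + θ₂ - 1) * F₀ v ^ (-1 : ℝ) := by
    intro u v h1 h2 h3
    have hc : a < u ∧ u < v ∧ v < b := ⟨h1, h2, h3⟩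
    simp only [dprh, if_pos hc]
    rw [show θ₁ + θ₂ - (θ₁ + θ₂) - 1 = (-1 : ℝ) by ring]
  have hdprh2 : ∀ u v, a < v → v < u → u < b →
      dprh a b F₀ f₀ θ₁ θ₂ (θ₁ + θ₂) θ₂' u v =
        θ₁ * θ₂' * f₀ u * f₀ v * F₀ u ^ (θ₁ + θ₂ - θ₂' - 1) * F₀ v ^ (θ₂' - 1) := by
    intro u v h1 h2 h3
    have hn : ¬ (a < u ∧ u < v ∧ v < b) := by
      rintro ⟨_, h5, _⟩
      exact lt_asymm h2 h5
    have hc : a < v ∧ v < u ∧ u < b := ⟨h1, h2, h3⟩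
    simp only [dprh, if_neg hn, if_pos hc]
  have hInner : ∀ u, a < u → u ≤ y₂ → y₂ < b →
      (∫ v in a..y₂, dprh a b F₀ f₀ θ₁ θ₂ (θ₁ + θ₂) θ₂' u v) =
        θ₁ * (f₀ u * F₀ u ^ (θ₁ + θ₂ - 1)) +
        (θ₁ + θ₂) * θ₂ * (f₀ u * F₀ u ^ (θ₁ + θ₂ - 1)) *
          (Real.log (F₀ y₂) - Real.log (F₀ u)) := by
    intro u hau huy hyb
    have hub : u < b := lt_of_le_of_lt huy hyb
    have hu : u ∈ Ioo a b := ⟨hau, hub⟩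
    have hA := keyA θ₂' hθ₂' u hau hub
    have heq1 : ∀ v ∈ Ioo a u,
        θ₁ * θ₂' * f₀ u * F₀ u ^ (θ₁ + θ₂ - θ₂' - 1) * (f₀ v * F₀ v ^ (θ₂' - 1)) =
          dprh a b F₀ f₀ θ₁ θ₂ (θ₁ + θ₂) θ₂' u v := by
      intro v hv
      rw [hdprh2 u v hv.1 hv.2 hub]
      ring
    have hii1 : IntervalIntegrable (fun v => dprh a b F₀ f₀ θ₁ θ₂ (θ₁ + θ₂) θ₂' u v)
        volume a u := ii_congr_Ioo hau.le heq1 (hA.1.const_mul _)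
    have hmul : F₀ u ^ (θ₁ + θ₂ - θ₂' - 1) * F₀ u ^ θ₂' = F₀ u ^ (θ₁ + θ₂ - 1) := by
      rw [← Real.rpow_add (hF₀pos u hu)]
      ring_nf
    have hval1 : (∫ v in a..u, dprh a b F₀ f₀ θ₁ θ₂ (θ₁ + θ₂) θ₂' u v) =
        θ₁ * (f₀ u * F₀ u ^ (θ₁ + θ₂ - 1)) := by
      rw [← integral_congr_Ioo hau.le heq1, intervalIntegral.integral_const_mul, hA.2, ← hmul]
      field_simp
    rcases eq_or_lt_of_le huy with heqy | hlty
    · rw [← heqy, hval1, sub_self, mul_zero, add_zero]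
    · have heq2 : ∀ v ∈ Ioo u y₂,
          (θ₁ + θ₂) * θ₂ * f₀ u * F₀ u ^ (θ₁ + θ₂ - 1) * (f₀ v * F₀ v ^ (-1 : ℝ)) =
            dprh a b F₀ f₀ θ₁ θ₂ (θ₁ + θ₂) θ₂' u v := by
        intro v hv
        rw [hdprh1 u v hau hv.1 (hv.2.trans hyb)]
        ring
      have hii2 : IntervalIntegrable (fun v => dprh a b F₀ f₀ θ₁ θ₂ (θ₁ + θ₂) θ₂' u v)
          volume u y₂ := by
        apply ii_congr_Ioo hlty.le heq2
        apply ContinuousOn.intervalIntegrable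
        rw [Set.uIcc_of_le hlty.le]
        exact continuousOn_const.mul (keyCont (-1) u y₂ hau hlty.le hyb)
      have hval2 : (∫ v in u..y₂, dprh a b F₀ f₀ θ₁ θ₂ (θ₁ + θ₂) θ₂' u v) =
          (θ₁ + θ₂) * θ₂ * (f₀ u * F₀ u ^ (θ₁ + θ₂ - 1)) *
            (Real.log (F₀ y₂) - Real.log (F₀ u)) := by
        rw [← integral_congr_Ioo hlty.le heq2, intervalIntegral.integral_const_mul,
          keyB u y₂ hau hlty.le hyb]
        ring
      rw [← intervalIntegral.integral_add_adjacent_intervals hii1 hii2, hval1, hval2]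
  -- the common antiderivative for the outer integral over (a, ·)
  have hGder : ∀ x ∈ Ioo a b,
      HasDerivAt (fun x => θ₁ * (F₀ x ^ (θ₁ + θ₂) / (θ₁ + θ₂)) +
          (θ₁ + θ₂) * θ₂ * (Real.log (F₀ y₂) * (F₀ x ^ (θ₁ + θ₂) / (θ₁ + θ₂)) -
            (F₀ x ^ (θ₁ + θ₂) / (θ₁ + θ₂) * Real.log (F₀ x) -
              F₀ x ^ (θ₁ + θ₂) / (θ₁ + θ₂) / (θ₁ + θ₂))))
        (θ₁ * (f₀ x * F₀ x ^ (θ₁ + θ₂ - 1)) +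
          (θ₁ + θ₂) * θ₂ * (f₀ x * F₀ x ^ (θ₁ + θ₂ - 1)) *
            (Real.log (F₀ y₂) - Real.log (F₀ x))) x := by
    intro x hx
    have hp := hPder (θ₁ + θ₂) hs.ne' x hx
    have hl := hlog x hx
    have hcomb := (hp.const_mul θ₁).add
      ((((hp.const_mul (Real.log (F₀ y₂)))).sub
        ((hp.mul hl).sub (hp.div_const (θ₁ + θ₂)))).const_mul ((θ₁ + θ₂) * θ₂))
    refine hcomb.congr_deriv ?_
    rw [hrsub x hx]
    have h0 := (hF₀pos x hx).ne'
    field_simp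
    ring
  have hGtend : Filter.Tendsto (fun x => θ₁ * (F₀ x ^ (θ₁ + θ₂) / (θ₁ + θ₂)) +
      (θ₁ + θ₂) * θ₂ * (Real.log (F₀ y₂) * (F₀ x ^ (θ₁ + θ₂) / (θ₁ + θ₂)) -
        (F₀ x ^ (θ₁ + θ₂) / (θ₁ + θ₂) * Real.log (F₀ x) -
          F₀ x ^ (θ₁ + θ₂) / (θ₁ + θ₂) / (θ₁ + θ₂))))
      (nhdsWithin a (Ioi a)) (nhds 0) := by
    have t1 : Filter.Tendsto (fun x => F₀ x ^ (θ₁ + θ₂) / (θ₁ + θ₂))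
        (nhdsWithin a (Ioi a)) (nhds 0) := by
      simpa using (hT1 _ hs).div_const (θ₁ + θ₂)
    have t2 : Filter.Tendsto (fun x => F₀ x ^ (θ₁ + θ₂) / (θ₁ + θ₂) * Real.log (F₀ x))
        (nhdsWithin a (Ioi a)) (nhds 0) := by
      have h := hT2.div_const (θ₁ + θ₂)
      have h2 := h.congr (fun x => by ring :
        ∀ x, F₀ x ^ (θ₁ + θ₂) * Real.log (F₀ x) / (θ₁ + θ₂) =
          F₀ x ^ (θ₁ + θ₂) / (θ₁ + θ₂) * Real.log (F₀ x))
      simpa using h2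
    have hc := (t1.const_mul θ₁).add
      (((t1.const_mul (Real.log (F₀ y₂))).sub (t2.sub (t1.div_const (θ₁ + θ₂)))).const_mul
        ((θ₁ + θ₂) * θ₂))
    simpa using hc
  refine ⟨?_, ?_⟩
  · -- Case 1 : a < y₁ < y₂ < b
    intro h1 h2 h3
    have hy₁b : y₁ < b := h2.trans h3
    have hy₁ : y₁ ∈ Ioo a b := ⟨h1, hy₁b⟩
    have hy₂ : y₂ ∈ Ioo a b := ⟨h1.trans h2, h3⟩
    have hgpos : ∀ x ∈ Ioo a y₁,
        0 ≤ θ₁ * (f₀ x * F₀ x ^ (θ₁ + θ₂ - 1)) +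
          (θ₁ + θ₂) * θ₂ * (f₀ x * F₀ x ^ (θ₁ + θ₂ - 1)) *
            (Real.log (F₀ y₂) - Real.log (F₀ x)) := by
      intro x hx
      have hx' : x ∈ Ioo a b := ⟨hx.1, hx.2.trans hy₁b⟩
      have h0 : 0 ≤ f₀ x * F₀ x ^ (θ₁ + θ₂ - 1) :=
        mul_nonneg (hf₀pos x hx').le (Real.rpow_nonneg (hF₀pos x hx').le _)
      have hle : Real.log (F₀ x) ≤ Real.log (F₀ y₂) :=
        (Real.log_le_log_iff (hF₀pos x hx') (hF₀pos y₂ hy₂)).2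
          (hmono hx' hy₂ (hx.2.trans h2)).le
      have hY := mul_nonneg (mul_nonneg (mul_nonneg hs.le hθ₂.le) h0) (sub_nonneg.2 hle)
      exact add_nonneg (mul_nonneg hθ₁.le h0) hY
    have himp := improper_ftc h1 (fun x hx => hGder x ⟨hx.1, hx.2.trans hy₁b⟩)
      (hGder y₁ hy₁).continuousAt hgpos hGtend
    have hcongr : ∀ u ∈ Ioo a y₁,
        (∫ v in a..y₂, dprh a b F₀ f₀ θ₁ θ₂ (θ₁ + θ₂) θ₂' u v) =
          θ₁ * (f₀ u * F₀ u ^ (θ₁ + θ₂ - 1)) +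
          (θ₁ + θ₂) * θ₂ * (f₀ u * F₀ u ^ (θ₁ + θ₂ - 1)) *
            (Real.log (F₀ y₂) - Real.log (F₀ u)) :=
      fun u hu => hInner u hu.1 (hu.2.trans h2).le h3
    rw [integral_congr_Ioo h1.le hcongr, himp.2,
      Real.log_div (hF₀pos y₂ hy₂).ne' (hF₀pos y₁ hy₁).ne']
    field_simp
    ring
  · -- Case 2 : a < y₂ < y₁ < b
    intro h1 h2 h3
    have hy₂b : y₂ < b := h2.trans h3
    have hy₂ : y₂ ∈ Ioo a b := ⟨h1, hy₂b⟩
    have hy₁ : y₁ ∈ Ioo a b := ⟨h1.trans h2, h3⟩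
    have hgpos : ∀ x ∈ Ioo a y₂,
        0 ≤ θ₁ * (f₀ x * F₀ x ^ (θ₁ + θ₂ - 1)) +
          (θ₁ + θ₂) * θ₂ * (f₀ x * F₀ x ^ (θ₁ + θ₂ - 1)) *
            (Real.log (F₀ y₂) - Real.log (F₀ x)) := by
      intro x hx
      have hx' : x ∈ Ioo a b := ⟨hx.1, hx.2.trans hy₂b⟩
      have h0 : 0 ≤ f₀ x * F₀ x ^ (θ₁ + θ₂ - 1) :=
        mul_nonneg (hf₀pos x hx').le (Real.rpow_nonneg (hF₀pos x hx').le _)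
      have hle : Real.log (F₀ x) ≤ Real.log (F₀ y₂) :=
        (Real.log_le_log_iff (hF₀pos x hx') (hF₀pos y₂ hy₂)).2
          (hmono hx' hy₂ hx.2).le
      have hY := mul_nonneg (mul_nonneg (mul_nonneg hs.le hθ₂.le) h0) (sub_nonneg.2 hle)
      exact add_nonneg (mul_nonneg hθ₁.le h0) hY
    have himp := improper_ftc h1 (fun x hx => hGder x ⟨hx.1, hx.2.trans hy₂b⟩)
      (hGder y₂ hy₂).continuousAt hgpos hGtend
    have hcongrA : ∀ u ∈ Ioo a y₂,
        θ₁ * (f₀ u * F₀ u ^ (θ₁ + θ₂ - 1)) +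
          (θ₁ + θ₂) * θ₂ * (f₀ u * F₀ u ^ (θ₁ + θ₂ - 1)) *
            (Real.log (F₀ y₂) - Real.log (F₀ u)) =
          (∫ v in a..y₂, dprh a b F₀ f₀ θ₁ θ₂ (θ₁ + θ₂) θ₂' u v) :=
      fun u hu => (hInner u hu.1 hu.2.le hy₂b).symm
    have hiiA : IntervalIntegrable
        (fun u => ∫ v in a..y₂, dprh a b F₀ f₀ θ₁ θ₂ (θ₁ + θ₂) θ₂' u v) volume a y₂ :=
      ii_congr_Ioo h1.le hcongrA himp.1
    have hInner2b : ∀ u, y₂ < u → u < b →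
        (∫ v in a..y₂, dprh a b F₀ f₀ θ₁ θ₂ (θ₁ + θ₂) θ₂' u v) =
          θ₁ * θ₂' * (F₀ y₂ ^ θ₂' / θ₂') * (f₀ u * F₀ u ^ (θ₁ + θ₂ - θ₂' - 1)) := by
      intro u hy₂u hub
      have heqv : ∀ v ∈ Ioo a y₂,
          θ₁ * θ₂' * f₀ u * F₀ u ^ (θ₁ + θ₂ - θ₂' - 1) * (f₀ v * F₀ v ^ (θ₂' - 1)) =
            dprh a b F₀ f₀ θ₁ θ₂ (θ₁ + θ₂) θ₂' u v := by
        intro v hv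
        rw [hdprh2 u v hv.1 (hv.2.trans hy₂u) hub]
        ring
      rw [← integral_congr_Ioo h1.le heqv, intervalIntegral.integral_const_mul,
        (keyA θ₂' hθ₂' y₂ h1 hy₂b).2]
      ring
    have hcongrB : ∀ u ∈ Ioo y₂ y₁,
        θ₁ * θ₂' * (F₀ y₂ ^ θ₂' / θ₂') * (f₀ u * F₀ u ^ (θ₁ + θ₂ - θ₂' - 1)) =
          (∫ v in a..y₂, dprh a b F₀ f₀ θ₁ θ₂ (θ₁ + θ₂) θ₂' u v) :=
      fun u hu => (hInner2b u hu.1 (hu.2.trans h3)).symm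
    have hiiB : IntervalIntegrable
        (fun u => ∫ v in a..y₂, dprh a b F₀ f₀ θ₁ θ₂ (θ₁ + θ₂) θ₂' u v) volume y₂ y₁ := by
      apply ii_congr_Ioo h2.le hcongrB
      apply ContinuousOn.intervalIntegrable
      rw [Set.uIcc_of_le h2.le]
      exact continuousOn_const.mul (keyCont (θ₁ + θ₂ - θ₂' - 1) y₂ y₁ h1 h2.le h3)
    have hvalB : (∫ u in y₂..y₁, ∫ v in a..y₂, dprh a b F₀ f₀ θ₁ θ₂ (θ₁ + θ₂) θ₂' u v) =
        θ₁ * θ₂' * (F₀ y₂ ^ θ₂' / θ₂') *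
          (F₀ y₁ ^ (θ₁ + θ₂ - θ₂') / (θ₁ + θ₂ - θ₂') -
            F₀ y₂ ^ (θ₁ + θ₂ - θ₂') / (θ₁ + θ₂ - θ₂')) := by
      rw [← integral_congr_Ioo h2.le hcongrB, intervalIntegral.integral_const_mul,
        show (θ₁ + θ₂ - θ₂' - 1) = (θ₁ + θ₂ - θ₂') - 1 by ring,
        keyC (θ₁ + θ₂ - θ₂') hp2 y₂ y₁ h1 h2.le h3]
    have hvalA : (∫ u in a..y₂, ∫ v in a..y₂, dprh a b F₀ f₀ θ₁ θ₂ (θ₁ + θ₂) θ₂' u v) =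
        θ₁ * (F₀ y₂ ^ (θ₁ + θ₂) / (θ₁ + θ₂)) +
          (θ₁ + θ₂) * θ₂ * (Real.log (F₀ y₂) * (F₀ y₂ ^ (θ₁ + θ₂) / (θ₁ + θ₂)) -
            (F₀ y₂ ^ (θ₁ + θ₂) / (θ₁ + θ₂) * Real.log (F₀ y₂) -
              F₀ y₂ ^ (θ₁ + θ₂) / (θ₁ + θ₂) / (θ₁ + θ₂))) := by
      rw [integral_congr_Ioo h1.le (fun u hu => (hcongrA u hu).symm), himp.2, sub_zero]
    rw [← intervalIntegral.integral_add_adjacent_intervals hiiA hiiB, hvalA, hvalB]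
    field_simp
    ring
end

section
/- (CDF, Case 3.) Suppose θ₁+θ₂ ≠ θ₁′ and θ₁+θ₂ = θ₂′. Then for the joint CDF F(y₁,y₂) = ∫_a^{y₁} ∫_a^{y₂} f(u,v) dv du of the DPRH model: if a < y₁ < y₂ < b then F(y₁,y₂) = F₀(y₁)^{θ₁+θ₂} + (θ₂ F₀(y₁)^{θ₁′}/(θ₁+θ₂−θ₁′))·[F₀(y₂)^{θ₁+θ₂−θ₁′} − F₀(y₁)^{θ₁+θ₂−θ₁′}], and if a < y₂ < y₁ < b then F(y₁,y₂) = F₀(y₂)^{θ₁+θ₂}·[1 + θ₁ ln(F₀(y₁)/F₀(y₂))]. -/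
open MeasureTheory Set

section helpers
variable {a b : ℝ} {F₀ f₀ : ℝ → ℝ}

lemma ae_ne_pt (u : ℝ) : ∀ᵐ v : ℝ ∂volume, v ≠ u := by
  rw [Filter.eventually_iff, MeasureTheory.mem_ae_iff]
  convert Real.volume_singleton (a := u) using 2
  ext v; simp

lemma hdA (hderiv : ∀ y ∈ Ioo a b, HasDerivAt F₀ (f₀ y) y)
    (hF₀pos : ∀ y ∈ Ioo a b, 0 < F₀ y) {c : ℝ} (hc : c ≠ 0) {x : ℝ} (hx : x ∈ Ioo a b) :
    HasDerivAt (fun v => F₀ v ^ c / c) (f₀ x * F₀ x ^ (c - 1)) x := by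
  have h := ((hderiv x hx).rpow_const (p := c) (Or.inl (hF₀pos x hx).ne')).div_const c
  refine h.congr_deriv ?_
  rw [div_eq_iff hc]
  ring

lemma contF (hderiv : ∀ y ∈ Ioo a b, HasDerivAt F₀ (f₀ y) y) :
    ContinuousOn F₀ (Ioo a b) :=
  fun x hx => (hderiv x hx).continuousAt.continuousWithinAt

lemma contInteg (hderiv : ∀ y ∈ Ioo a b, HasDerivAt F₀ (f₀ y) y)
    (hf₀cont : ContinuousOn f₀ (Ioo a b))
    (hF₀pos : ∀ y ∈ Ioo a b, 0 < F₀ y) (c : ℝ) :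
    ContinuousOn (fun v => f₀ v * F₀ v ^ (c - 1)) (Ioo a b) :=
  hf₀cont.mul ((contF hderiv).rpow_const (fun x hx => Or.inl (hF₀pos x hx).ne'))

lemma ftc_improper (hderiv : ∀ y ∈ Ioo a b, HasDerivAt F₀ (f₀ y) y)
    (hf₀pos : ∀ y ∈ Ioo a b, 0 < f₀ y)
    (hF₀pos : ∀ y ∈ Ioo a b, 0 < F₀ y)
    (hFa : Filter.Tendsto F₀ (nhdsWithin a (Ioi a)) (nhds 0))
    {c : ℝ} (hc : 0 < c) {z : ℝ} (hz : z ∈ Ioo a b) :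
    IntegrableOn (fun v => f₀ v * F₀ v ^ (c - 1)) (Ioc a z) volume ∧
      ∫ v in a..z, f₀ v * F₀ v ^ (c - 1) = F₀ z ^ c / c := by
  obtain ⟨haz, hzb⟩ := hz
  set g : ℝ → ℝ := fun v => if a < v then F₀ v ^ c / c else 0 with hgdef
  have hsub : Ioo a z ⊆ Ioo a b := Ioo_subset_Ioo le_rfl hzb.le
  have hgd : ∀ x ∈ Ioo a z, HasDerivAt g (f₀ x * F₀ x ^ (c - 1)) x := by
    intro x hx
    refine (hdA hderiv hF₀pos hc.ne' (hsub hx)).congr_of_eventuallyEq ?_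
    filter_upwards [Ioi_mem_nhds hx.1] with v hv
    simp [g, show a < v from hv]
  have hgz : Filter.Tendsto g (nhdsWithin a (Ioi a)) (nhds 0) := by
    have h2 : Filter.Tendsto (fun v => F₀ v ^ c / c) (nhdsWithin a (Ioi a)) (nhds 0) := by
      have h3 := ((Real.continuousAt_rpow_const 0 c (Or.inr hc.le)).tendsto.comp hFa).div_const c
      simpa [Real.zero_rpow hc.ne'] using h3
    refine h2.congr' ?_
    filter_upwards [self_mem_nhdsWithin] with v hv
    simp [g, show a < v from hv]
  have hca : ∀ x ∈ Ioo a b, ContinuousAt g x := by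
    intro x hx
    refine ((hdA hderiv hF₀pos hc.ne' hx).continuousAt).congr ?_
    filter_upwards [Ioi_mem_nhds hx.1] with v hv
    simp [g, show a < v from hv]
  have hgcont : ContinuousOn g (Icc a z) := by
    intro x hx
    rcases eq_or_lt_of_le hx.1 with heq | hax
    · subst heq
      have hcw : ContinuousWithinAt g (Ioi a) a := by
        have hgx : g a = 0 := by simp [g]
        rw [ContinuousWithinAt, hgx]
        exact hgz
      exact (continuousWithinAt_Ioi_iff_Ici.1 hcw).mono Icc_subset_Ici_self
    · exact (hca x ⟨hax, lt_of_le_of_lt hx.2 hzb⟩).continuousWithinAt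
  have hpos : ∀ x ∈ Ioo a z, 0 ≤ f₀ x * F₀ x ^ (c - 1) := fun x hx =>
    mul_nonneg (hf₀pos x (hsub hx)).le (Real.rpow_nonneg (hF₀pos x (hsub hx)).le _)
  have hint : IntegrableOn (fun v => f₀ v * F₀ v ^ (c - 1)) (Ioc a z) volume :=
    intervalIntegral.integrableOn_deriv_of_nonneg hgcont hgd hpos
  refine ⟨hint, ?_⟩
  have hii : IntervalIntegrable (fun v => f₀ v * F₀ v ^ (c - 1)) volume a z := by
    rw [intervalIntegrable_iff_integrableOn_Ioc_of_le haz.le]; exact hint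
  have htz : Filter.Tendsto g (nhdsWithin z (Iio z)) (nhds (F₀ z ^ c / c)) := by
    have h1 := (hca z ⟨haz, hzb⟩).continuousWithinAt (s := Iio z)
    have hgzv : g z = F₀ z ^ c / c := by simp [g, haz]
    rwa [ContinuousWithinAt, hgzv] at h1
  rw [intervalIntegral.integral_eq_sub_of_hasDerivAt_of_tendsto haz hgd hii hgz htz]
  simp

lemma ftc_compact (hderiv : ∀ y ∈ Ioo a b, HasDerivAt F₀ (f₀ y) y)
    (hf₀cont : ContinuousOn f₀ (Ioo a b))
    (hF₀pos : ∀ y ∈ Ioo a b, 0 < F₀ y) {c : ℝ} (hc : c ≠ 0)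
    {x y : ℝ} (hx : x ∈ Ioo a b) (hy : y ∈ Ioo a b) :
    ∫ v in x..y, f₀ v * F₀ v ^ (c - 1) = (F₀ y ^ c - F₀ x ^ c) / c := by
  have hsub : uIcc x y ⊆ Ioo a b := (Set.ordConnected_Ioo).uIcc_subset hx hy
  rw [intervalIntegral.integral_eq_sub_of_hasDerivAt
    (f := fun v => F₀ v ^ c / c)
    (fun t ht => hdA hderiv hF₀pos hc (hsub ht))
    (((contInteg hderiv hf₀cont hF₀pos c).mono hsub).intervalIntegrable)]
  ring

lemma ftc_log (hderiv : ∀ y ∈ Ioo a b, HasDerivAt F₀ (f₀ y) y)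
    (hf₀cont : ContinuousOn f₀ (Ioo a b))
    (hF₀pos : ∀ y ∈ Ioo a b, 0 < F₀ y)
    {x y : ℝ} (hx : x ∈ Ioo a b) (hy : y ∈ Ioo a b) :
    ∫ v in x..y, f₀ v / F₀ v = Real.log (F₀ y) - Real.log (F₀ x) := by
  have hsub : uIcc x y ⊆ Ioo a b := (Set.ordConnected_Ioo).uIcc_subset hx hy
  have hcont : ContinuousOn (fun v => f₀ v / F₀ v) (Ioo a b) :=
    hf₀cont.div (contF hderiv) (fun t ht => (hF₀pos t ht).ne')
  rw [intervalIntegral.integral_eq_sub_of_hasDerivAt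
    (f := fun v => Real.log (F₀ v))
    (fun t ht => (hderiv t (hsub ht)).log (hF₀pos t (hsub ht)).ne')
    ((hcont.mono hsub).intervalIntegrable)]

end helpers

section inner
variable {a b : ℝ} {F₀ f₀ : ℝ → ℝ}

lemma inner_ge
    (hderiv : ∀ y ∈ Ioo a b, HasDerivAt F₀ (f₀ y) y)
    (hf₀pos : ∀ y ∈ Ioo a b, 0 < f₀ y)
    (hF₀pos : ∀ y ∈ Ioo a b, 0 < F₀ y)
    (hFa : Filter.Tendsto F₀ (nhdsWithin a (Ioi a)) (nhds 0))
    (θ₁ θ₂ θ₁' θ₂' : ℝ) (hθ₂' : 0 < θ₂')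
    {u z : ℝ} (hu : u ∈ Ioo a b) (hz : z ∈ Ioo a b) (hzu : z ≤ u) :
    ∫ v in a..z, dprh a b F₀ f₀ θ₁ θ₂ θ₁' θ₂' u v
      = θ₁ * f₀ u * F₀ u ^ (θ₁ + θ₂ - θ₂' - 1) * F₀ z ^ θ₂' := by
  have haz : a < z := hz.1
  have hae : ∀ᵐ v ∂(volume : Measure ℝ), v ∈ Set.uIoc a z →
      dprh a b F₀ f₀ θ₁ θ₂ θ₁' θ₂' u v
        = (θ₁ * θ₂' * f₀ u * F₀ u ^ (θ₁ + θ₂ - θ₂' - 1)) * (f₀ v * F₀ v ^ (θ₂' - 1)) := by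
    filter_upwards [ae_ne_pt u] with v hvne hv
    rw [uIoc_of_le haz.le] at hv
    have hvu : v < u := lt_of_le_of_ne (hv.2.trans hzu) hvne
    have h1 : ¬(a < u ∧ u < v ∧ v < b) := by
      rintro ⟨-, h2, -⟩; exact absurd h2 (not_lt.2 hvu.le)
    unfold dprh
    rw [if_neg h1, if_pos ⟨hv.1, hvu, hu.2⟩]
    ring
  rw [intervalIntegral.integral_congr_ae hae, intervalIntegral.integral_const_mul,
    (ftc_improper hderiv hf₀pos hF₀pos hFa hθ₂' hz).2]
  field_simp

lemma inner_lt
    (hderiv : ∀ y ∈ Ioo a b, HasDerivAt F₀ (f₀ y) y)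
    (hf₀cont : ContinuousOn f₀ (Ioo a b))
    (hf₀pos : ∀ y ∈ Ioo a b, 0 < f₀ y)
    (hF₀pos : ∀ y ∈ Ioo a b, 0 < F₀ y)
    (hFa : Filter.Tendsto F₀ (nhdsWithin a (Ioi a)) (nhds 0))
    (θ₁ θ₂ θ₁' θ₂' : ℝ) (hθ₂' : 0 < θ₂') (hne₁ : θ₁ + θ₂ ≠ θ₁')
    {u z : ℝ} (hu : u ∈ Ioo a b) (hz : z ∈ Ioo a b) (huz : u < z) :
    ∫ v in a..z, dprh a b F₀ f₀ θ₁ θ₂ θ₁' θ₂' u v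
      = θ₁ * f₀ u * F₀ u ^ (θ₁ + θ₂ - 1)
        + θ₁' * θ₂ * f₀ u * F₀ u ^ (θ₁' - 1) *
          ((F₀ z ^ (θ₁ + θ₂ - θ₁') - F₀ u ^ (θ₁ + θ₂ - θ₁')) / (θ₁ + θ₂ - θ₁')) := by
  have hau : a < u := hu.1
  have hzb : z < b := hz.2
  have hcne : θ₁ + θ₂ - θ₁' ≠ 0 := sub_ne_zero.2 hne₁
  have hae1 : ∀ᵐ v ∂(volume : Measure ℝ), v ∈ Set.uIoc a u →
      dprh a b F₀ f₀ θ₁ θ₂ θ₁' θ₂' u v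
        = (θ₁ * θ₂' * f₀ u * F₀ u ^ (θ₁ + θ₂ - θ₂' - 1)) * (f₀ v * F₀ v ^ (θ₂' - 1)) := by
    filter_upwards [ae_ne_pt u] with v hvne hv
    rw [uIoc_of_le hau.le] at hv
    have hvu : v < u := lt_of_le_of_ne hv.2 hvne
    have h1 : ¬(a < u ∧ u < v ∧ v < b) := by
      rintro ⟨-, h2, -⟩; exact absurd h2 (not_lt.2 hvu.le)
    unfold dprh
    rw [if_neg h1, if_pos ⟨hv.1, hvu, hu.2⟩]
    ring
  have hae2 : ∀ᵐ v ∂(volume : Measure ℝ), v ∈ Set.uIoc u z →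
      dprh a b F₀ f₀ θ₁ θ₂ θ₁' θ₂' u v
        = (θ₁' * θ₂ * f₀ u * F₀ u ^ (θ₁' - 1)) * (f₀ v * F₀ v ^ (θ₁ + θ₂ - θ₁' - 1)) := by
    refine Filter.Eventually.of_forall (fun v hv => ?_)
    rw [uIoc_of_le huz.le] at hv
    unfold dprh
    rw [if_pos ⟨hau, hv.1, lt_of_le_of_lt hv.2 hzb⟩]
    ring
  have hii1 : IntervalIntegrable (dprh a b F₀ f₀ θ₁ θ₂ θ₁' θ₂' u) volume a u := by
    rw [intervalIntegrable_iff, uIoc_of_le hau.le]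
    exact (((ftc_improper hderiv hf₀pos hF₀pos hFa hθ₂' hu).1).const_mul _).congr
      ((ae_restrict_iff' measurableSet_Ioc).2
        ((hae1.mono fun v h => by
          rw [uIoc_of_le hau.le] at h
          exact fun hv => (h hv).symm)))
  have hsub2 : uIcc u z ⊆ Ioo a b := (Set.ordConnected_Ioo).uIcc_subset hu hz
  have hii2 : IntervalIntegrable (dprh a b F₀ f₀ θ₁ θ₂ θ₁' θ₂' u) volume u z := by
    have hcont : IntervalIntegrable
        ((θ₁' * θ₂ * f₀ u * F₀ u ^ (θ₁' - 1)) •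
          fun v => f₀ v * F₀ v ^ (θ₁ + θ₂ - θ₁' - 1)) volume u z :=
      (((contInteg hderiv hf₀cont hF₀pos (θ₁ + θ₂ - θ₁')).mono
        hsub2).const_smul (θ₁' * θ₂ * f₀ u * F₀ u ^ (θ₁' - 1))).intervalIntegrable
    rw [intervalIntegrable_iff] at hcont ⊢
    refine hcont.congr ((ae_restrict_iff' (by rw [uIoc_of_le huz.le]; exact measurableSet_Ioc)).2
      (hae2.mono fun v h hv => ?_))
    simp only [Pi.smul_apply, smul_eq_mul]
    exact (h hv).symm
  rw [← intervalIntegral.integral_add_adjacent_intervals hii1 hii2,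
      intervalIntegral.integral_congr_ae hae1, intervalIntegral.integral_congr_ae hae2,
      intervalIntegral.integral_const_mul, intervalIntegral.integral_const_mul,
      (ftc_improper hderiv hf₀pos hF₀pos hFa hθ₂' hu).2,
      ftc_compact hderiv hf₀cont hF₀pos hcne hu hz]
  have hup : (0:ℝ) < F₀ u := hF₀pos u hu
  have hsplit : F₀ u ^ (θ₁ + θ₂ - 1) = F₀ u ^ (θ₁ + θ₂ - θ₂' - 1) * F₀ u ^ θ₂' := by
    rw [← Real.rpow_add hup]; congr 1; ring
  rw [hsplit]
  field_simp

end inner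

section outer
variable {a b : ℝ} {F₀ f₀ : ℝ → ℝ}

lemma outer_le
    (hderiv : ∀ y ∈ Ioo a b, HasDerivAt F₀ (f₀ y) y)
    (hf₀cont : ContinuousOn f₀ (Ioo a b))
    (hf₀pos : ∀ y ∈ Ioo a b, 0 < f₀ y)
    (hF₀pos : ∀ y ∈ Ioo a b, 0 < F₀ y)
    (hFa : Filter.Tendsto F₀ (nhdsWithin a (Ioi a)) (nhds 0))
    (θ₁ θ₂ θ₁' θ₂' : ℝ) (hθ₁' : 0 < θ₁') (hθ₂' : 0 < θ₂')
    (hne₁ : θ₁ + θ₂ ≠ θ₁') (hs : 0 < θ₁ + θ₂)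
    {w z : ℝ} (hw : w ∈ Ioo a b) (hz : z ∈ Ioo a b) (hwz : w ≤ z) :
    IntervalIntegrable (fun u => ∫ v in a..z, dprh a b F₀ f₀ θ₁ θ₂ θ₁' θ₂' u v) volume a w ∧
    (∫ u in a..w, (∫ v in a..z, dprh a b F₀ f₀ θ₁ θ₂ θ₁' θ₂' u v))
      = F₀ w ^ (θ₁ + θ₂) + θ₂ * F₀ w ^ θ₁' / (θ₁ + θ₂ - θ₁') *
          (F₀ z ^ (θ₁ + θ₂ - θ₁') - F₀ w ^ (θ₁ + θ₂ - θ₁')) := by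
  have haw : a < w := hw.1
  have hcne : θ₁ + θ₂ - θ₁' ≠ 0 := sub_ne_zero.2 hne₁
  have hae : ∀ᵐ u ∂(volume : Measure ℝ), u ∈ Set.uIoc a w →
      (∫ v in a..z, dprh a b F₀ f₀ θ₁ θ₂ θ₁' θ₂' u v)
        = (θ₁ - θ₁' * θ₂ / (θ₁ + θ₂ - θ₁')) * (f₀ u * F₀ u ^ (θ₁ + θ₂ - 1))
          + (θ₁' * θ₂ / (θ₁ + θ₂ - θ₁') * F₀ z ^ (θ₁ + θ₂ - θ₁')) *
            (f₀ u * F₀ u ^ (θ₁' - 1)) := by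
    filter_upwards [ae_ne_pt z] with u hune hu
    rw [uIoc_of_le haw.le] at hu
    have huo : u ∈ Ioo a b := ⟨hu.1, lt_of_le_of_lt hu.2 hw.2⟩
    have huz : u < z := lt_of_le_of_ne (hu.2.trans hwz) hune
    rw [inner_lt hderiv hf₀cont hf₀pos hF₀pos hFa θ₁ θ₂ θ₁' θ₂' hθ₂' hne₁ huo hz huz]
    have h2 : F₀ u ^ (θ₁ + θ₂ - 1) = F₀ u ^ (θ₁' - 1) * F₀ u ^ (θ₁ + θ₂ - θ₁') := by
      rw [← Real.rpow_add (hF₀pos u huo)]; congr 1; ring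
    rw [h2]
    field_simp
    ring
  have hint1 := ftc_improper hderiv hf₀pos hF₀pos hFa hs hw
  have hint2 := ftc_improper hderiv hf₀pos hF₀pos hFa hθ₁' hw
  have hiiA : IntervalIntegrable (fun u => f₀ u * F₀ u ^ (θ₁ + θ₂ - 1)) volume a w := by
    rw [intervalIntegrable_iff_integrableOn_Ioc_of_le haw.le]; exact hint1.1
  have hiiB : IntervalIntegrable (fun u => f₀ u * F₀ u ^ (θ₁' - 1)) volume a w := by
    rw [intervalIntegrable_iff_integrableOn_Ioc_of_le haw.le]; exact hint2.1
  have hiiS : IntervalIntegrable (fun u =>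
      (θ₁ - θ₁' * θ₂ / (θ₁ + θ₂ - θ₁')) * (f₀ u * F₀ u ^ (θ₁ + θ₂ - 1))
        + (θ₁' * θ₂ / (θ₁ + θ₂ - θ₁') * F₀ z ^ (θ₁ + θ₂ - θ₁')) *
          (f₀ u * F₀ u ^ (θ₁' - 1))) volume a w :=
    (hiiA.const_mul _).add (hiiB.const_mul _)
  constructor
  · rw [intervalIntegrable_iff] at hiiS ⊢
    refine hiiS.congr ((ae_restrict_iff' (by rw [uIoc_of_le haw.le]; exact measurableSet_Ioc)).2
      (hae.mono fun u h hu => (h hu).symm))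
  rw [intervalIntegral.integral_congr_ae hae,
      intervalIntegral.integral_add (hiiA.const_mul _) (hiiB.const_mul _),
      intervalIntegral.integral_const_mul, intervalIntegral.integral_const_mul,
      hint1.2, hint2.2]
  have h3 : F₀ w ^ (θ₁ + θ₂) = F₀ w ^ θ₁' * F₀ w ^ (θ₁ + θ₂ - θ₁') := by
    rw [← Real.rpow_add (hF₀pos w hw)]; congr 1; ring
  rw [h3]
  field_simp
  ring

end outer

theorem dprh_cdf_case3
    (a b : ℝ) (hab : a < b) (F₀ f₀ : ℝ → ℝ)
    (hderiv : ∀ y ∈ Ioo a b, HasDerivAt F₀ (f₀ y) y)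
    (hf₀cont : ContinuousOn f₀ (Ioo a b))
    (hmono : StrictMonoOn F₀ (Ioo a b))
    (hf₀pos : ∀ y ∈ Ioo a b, 0 < f₀ y)
    (hF₀pos : ∀ y ∈ Ioo a b, 0 < F₀ y)
    (hF₀lt1 : ∀ y ∈ Ioo a b, F₀ y < 1)
    (hFa : Filter.Tendsto F₀ (nhdsWithin a (Ioi a)) (nhds 0))
    (hFb : Filter.Tendsto F₀ (nhdsWithin b (Iio b)) (nhds 1))
    (θ₁ θ₂ θ₁' θ₂' : ℝ) (hθ₁ : 0 < θ₁) (hθ₂ : 0 < θ₂) (hθ₁' : 0 < θ₁') (hθ₂' : 0 < θ₂')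
    (hne₁ : θ₁ + θ₂ ≠ θ₁') (heq₂ : θ₁ + θ₂ = θ₂') (y₁ y₂ : ℝ)
    :
    (a < y₁ → y₁ < y₂ → y₂ < b →
      (∫ u in a..y₁, ∫ v in a..y₂, dprh a b F₀ f₀ θ₁ θ₂ θ₁' θ₂' u v) =
        F₀ y₁ ^ (θ₁ + θ₂) + θ₂ * F₀ y₁ ^ θ₁' / (θ₁ + θ₂ - θ₁') *
          (F₀ y₂ ^ (θ₁ + θ₂ - θ₁') - F₀ y₁ ^ (θ₁ + θ₂ - θ₁'))) ∧
    (a < y₂ → y₂ < y₁ → y₁ < b →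
      (∫ u in a..y₁, ∫ v in a..y₂, dprh a b F₀ f₀ θ₁ θ₂ θ₁' θ₂' u v) =
        F₀ y₂ ^ (θ₁ + θ₂) * (1 + θ₁ * Real.log (F₀ y₁ / F₀ y₂))) := by
  have hs : 0 < θ₁ + θ₂ := add_pos hθ₁ hθ₂
  constructor
  · intro h1 h2 h3
    exact (outer_le hderiv hf₀cont hf₀pos hF₀pos hFa θ₁ θ₂ θ₁' θ₂' hθ₁' hθ₂' hne₁ hs
      ⟨h1, h2.trans h3⟩ ⟨h1.trans h2, h3⟩ h2.le).2
  · intro h1 h2 h3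
    have hy₂o : y₂ ∈ Ioo a b := ⟨h1, h2.trans h3⟩
    have hy₁o : y₁ ∈ Ioo a b := ⟨h1.trans h2, h3⟩
    have houter := outer_le hderiv hf₀cont hf₀pos hF₀pos hFa θ₁ θ₂ θ₁' θ₂' hθ₁' hθ₂' hne₁ hs
      hy₂o hy₂o le_rfl
    have hae2 : ∀ᵐ u ∂(volume : Measure ℝ), u ∈ Set.uIoc y₂ y₁ →
        (∫ v in a..y₂, dprh a b F₀ f₀ θ₁ θ₂ θ₁' θ₂' u v)
          = (θ₁ * F₀ y₂ ^ θ₂') * (f₀ u / F₀ u) := by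
      refine Filter.Eventually.of_forall fun u hu => ?_
      rw [uIoc_of_le h2.le] at hu
      have huo : u ∈ Ioo a b := ⟨h1.trans hu.1, lt_of_le_of_lt hu.2 h3⟩
      rw [inner_ge hderiv hf₀pos hF₀pos hFa θ₁ θ₂ θ₁' θ₂' hθ₂' huo hy₂o hu.1.le]
      rw [show θ₁ + θ₂ - θ₂' - 1 = -1 by rw [heq₂]; ring, Real.rpow_neg_one]
      field_simp
    have hsub2 : uIcc y₂ y₁ ⊆ Ioo a b := (Set.ordConnected_Ioo).uIcc_subset hy₂o hy₁o
    have hii2 : IntervalIntegrable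
        (fun u => ∫ v in a..y₂, dprh a b F₀ f₀ θ₁ θ₂ θ₁' θ₂' u v) volume y₂ y₁ := by
      have hcont : IntervalIntegrable
          ((θ₁ * F₀ y₂ ^ θ₂') • fun u => f₀ u / F₀ u) volume y₂ y₁ :=
        (((hf₀cont.div (contF hderiv) (fun t ht => (hF₀pos t ht).ne')).mono
          hsub2).const_smul (θ₁ * F₀ y₂ ^ θ₂')).intervalIntegrable
      rw [intervalIntegrable_iff] at hcont ⊢
      refine hcont.congr ((ae_restrict_iff' (by rw [uIoc_of_le h2.le]; exact measurableSet_Ioc)).2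
        (hae2.mono fun u h hu => ?_))
      simp only [Pi.smul_apply, smul_eq_mul]
      exact (h hu).symm
    rw [← intervalIntegral.integral_add_adjacent_intervals houter.1 hii2,
        intervalIntegral.integral_congr_ae hae2, intervalIntegral.integral_const_mul,
        ftc_log hderiv hf₀cont hF₀pos hy₂o hy₁o, houter.2,
        Real.log_div (hF₀pos y₁ hy₁o).ne' (hF₀pos y₂ hy₂o).ne', ← heq₂]
    ring
end
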